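/- Let X be a zero-dimensional metrizable separable space of cardinality at least two, f : X → X a homeomorphism, and x ∈ X a point whose orbit {fⁱ(x) : i ∈ ℤ} is dense in X. Then the following are equivalent: (1) (X,G_f) has no continuous 2-coloring; (2) the closure of {f^{2n}(x) : n ∈ ℤ} meets the closure of {f^{2p+1}(x) : p ∈ ℤ}; (3) there is y ∈ X with (y,y) in the closure in X×X of ⋃_{p∈ℕ} G_f^{2p+1}; (4) there is y ∈ X with (y,y) in the closure in X×X of ⋃_{p∈ℕ} (\overline{G_f})^{2p+1}, where \overline{G_f} is the closure of G_f in X×X. -/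

import Mathlib

open TopologicalSpace

/-- A *graph* on `X`: a symmetric irreflexive binary relation on `X`. -/
def IsGraph {X : Type*} (G : Set (X × X)) : Prop :=
  (∀ x y : X, (x, y) ∈ G → (y, x) ∈ G) ∧ ∀ x : X, (x, x) ∉ G

/-- `(X, G)` admits a continuous coloring with `n` colors
(`Fin n` carries the discrete topology). -/
def HasContColoring {X : Type*} [TopologicalSpace X] (G : Set (X × X)) (n : ℕ) : Prop :=
  ∃ c : X → Fin n, Continuous c ∧ ∀ x y : X, (x, y) ∈ G → c x ≠ c y

/-- `(X, G)` admits a countable continuous coloring (`ℕ` is discrete). -/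
def HasCtbleContColoring {X : Type*} [TopologicalSpace X] (G : Set (X × X)) : Prop :=
  ∃ c : X → ℕ, Continuous c ∧ ∀ x y : X, (x, y) ∈ G → c x ≠ c y

/-- `(X,G) ≼_c (Y,H)` : there is a continuous homomorphism. -/
def RedC {X Y : Type*} [TopologicalSpace X] [TopologicalSpace Y]
    (G : Set (X × X)) (H : Set (Y × Y)) : Prop :=
  ∃ φ : X → Y, Continuous φ ∧ ∀ x y : X, (x, y) ∈ G → (φ x, φ y) ∈ H

/-- `(X,G) ≼^i_c (Y,H)` : there is an injective continuous homomorphism. -/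
def RedIC {X Y : Type*} [TopologicalSpace X] [TopologicalSpace Y]
    (G : Set (X × X)) (H : Set (Y × Y)) : Prop :=
  ∃ φ : X → Y, Continuous φ ∧ Function.Injective φ ∧
    ∀ x y : X, (x, y) ∈ G → (φ x, φ y) ∈ H

/-- A space is zero-dimensional if the clopen sets form a basis. -/
def ZeroDim (X : Type*) [TopologicalSpace X] : Prop :=
  IsTopologicalBasis {s : Set X | IsClopen s}

/-- zero-dimensional metrizable compact -/
def Is0DMC (X : Type*) [TopologicalSpace X] : Prop :=
  CompactSpace X ∧ MetrizableSpace X ∧ ZeroDim X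

/-- zero-dimensional metrizable separable -/
def Is0DMS (X : Type*) [TopologicalSpace X] : Prop :=
  MetrizableSpace X ∧ SeparableSpace X ∧ ZeroDim X

/-- The graph induced by a (total) function `f : X → X`. -/
def FnGraph {X : Type*} (f : X → X) : Set (X × X) :=
  {p | p.1 ≠ p.2 ∧ (p.2 = f p.1 ∨ p.1 = f p.2)}

/-- `R^l` : the `l`-fold relational composition of `R`. -/
def RelPow {X : Type*} (R : Set (X × X)) (l : ℕ) : Set (X × X) :=
  {p | ∃ f : ℕ → X, f 0 = p.1 ∧ f l = p.2 ∧ ∀ i < l, (f i, f (i + 1)) ∈ R}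

lemma relPow_mono {X : Type*} {R S : Set (X × X)} (h : R ⊆ S) (l : ℕ) :
    RelPow R l ⊆ RelPow S l := by
  rintro ⟨a, b⟩ ⟨g, h0, hl, hs⟩
  exact ⟨g, h0, hl, fun i hi => h (hs i hi)⟩

lemma fin2_step (a b : Fin 2) (h : a ≠ b) : b = a + 1 := by revert a b; decide

open Fin.NatCast

theorem stmt17 (X : Type*) [TopologicalSpace X] [Nontrivial X] (h0 : Is0DMS X)
    (f : X ≃ₜ X) (x : X)
    (hx : Dense (Set.range fun i : ℤ => (f.toEquiv ^ i) x)) :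
    List.TFAE
      [¬ HasContColoring (FnGraph ⇑f) 2,
       (closure (Set.range fun n : ℤ => (f.toEquiv ^ (2 * n)) x) ∩
          closure (Set.range fun p : ℤ => (f.toEquiv ^ (2 * p + 1)) x)).Nonempty,
       ∃ y : X, (y, y) ∈ closure (⋃ p : ℕ, RelPow (FnGraph ⇑f) (2 * p + 1)),
       ∃ y : X, (y, y) ∈ closure (⋃ p : ℕ, RelPow (closure (FnGraph ⇑f)) (2 * p + 1))] := by
  classical
  haveI : MetrizableSpace X := h0.1
  have horb1 : ∀ i : ℤ, (f.toEquiv ^ (i + 1)) x = f ((f.toEquiv ^ i) x) := by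
    intro i
    rw [add_comm, zpow_add, zpow_one, Equiv.Perm.mul_apply]
    rfl
  -- consecutive orbit points are distinct
  have hne : ∀ i : ℤ, (f.toEquiv ^ i) x ≠ (f.toEquiv ^ (i + 1)) x := by
    intro i h
    have hfix : Function.IsFixedPt (⇑f.toEquiv) ((f.toEquiv ^ i) x) := by
      show f.toEquiv ((f.toEquiv ^ i) x) = (f.toEquiv ^ i) x
      rw [show (f.toEquiv ((f.toEquiv ^ i) x)) = f ((f.toEquiv ^ i) x) from rfl, ← horb1, ← h]
    have hall : ∀ j : ℤ, (f.toEquiv ^ j) x = (f.toEquiv ^ i) x := by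
      intro j
      have h1 : (f.toEquiv ^ j) x = (f.toEquiv ^ (j - i)) ((f.toEquiv ^ i) x) := by
        rw [← Equiv.Perm.mul_apply, ← zpow_add, sub_add_cancel]
      rw [h1, hfix.perm_zpow (j - i)]
    have hsub : Set.range (fun j : ℤ => (f.toEquiv ^ j) x) ⊆ {(f.toEquiv ^ i) x} := by
      rintro _ ⟨j, rfl⟩; exact hall j
    have hdense : Dense ({(f.toEquiv ^ i) x} : Set X) := hx.mono hsub
    obtain ⟨w, hw⟩ := exists_ne ((f.toEquiv ^ i) x)
    have : w ∈ closure ({(f.toEquiv ^ i) x} : Set X) := hdense w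
    rw [isClosed_singleton.closure_eq] at this
    exact hw this
  have hedgeF : ∀ i : ℤ, ((f.toEquiv ^ i) x, (f.toEquiv ^ (i + 1)) x) ∈ FnGraph ⇑f :=
    fun i => ⟨hne i, Or.inl (horb1 i)⟩
  have hedgeB : ∀ i : ℤ, ((f.toEquiv ^ (i + 1)) x, (f.toEquiv ^ i) x) ∈ FnGraph ⇑f :=
    fun i => ⟨(hne i).symm, Or.inr (horb1 i)⟩
  -- forward paths along the orbit
  have pathF : ∀ (l : ℕ) (i j : ℤ), j = i + l →
      ((f.toEquiv ^ i) x, (f.toEquiv ^ j) x) ∈ RelPow (FnGraph ⇑f) l := by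
    intro l
    induction l with
    | zero =>
      intro i j hj
      exact ⟨fun _ => (f.toEquiv ^ i) x, rfl, by rw [show i = j by omega], fun k hk => absurd hk (by omega)⟩
    | succ l ih =>
      intro i j hj
      obtain ⟨g, hg0, hgl, hgs⟩ := ih i (i + l) rfl
      refine ⟨fun k => if k = l + 1 then (f.toEquiv ^ j) x else g k, by simp [hg0], by simp, ?_⟩
      intro k hk
      rcases Nat.lt_or_ge k l with h | h
      · simp only [if_neg (by omega : ¬ k = l + 1), if_neg (by omega : ¬ k + 1 = l + 1)]
        exact hgs k h
      · have hkl : k = l := by omega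
        subst hkl
        simp only [if_neg (by omega : ¬ k = k + 1), if_pos rfl, hgl]
        have hj' : j = (i + k) + 1 := by omega
        rw [hj']
        exact hedgeF (i + k)
  -- backward paths along the orbit
  have pathB : ∀ (l : ℕ) (i j : ℤ), i = j + l →
      ((f.toEquiv ^ i) x, (f.toEquiv ^ j) x) ∈ RelPow (FnGraph ⇑f) l := by
    intro l
    induction l with
    | zero =>
      intro i j hj
      exact ⟨fun _ => (f.toEquiv ^ i) x, rfl, by rw [show i = j by omega], fun k hk => absurd hk (by omega)⟩
    | succ l ih =>
      intro i j hj
      obtain ⟨g, hg0, hgl, hgs⟩ := ih (j + l) j rfl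
      refine ⟨fun k => if k = 0 then (f.toEquiv ^ i) x else g (k - 1), rfl,
        by simp [hgl], ?_⟩
      intro k hk
      rcases Nat.eq_or_lt_of_le (Nat.zero_le k) with h | h
      · have hk0 : k = 0 := h.symm
        subst hk0
        simp only [if_pos rfl, if_neg (by omega : ¬ (0:ℕ) + 1 = 0)]
        simp only [Nat.add_sub_cancel, hg0]
        have hj' : i = (j + l) + 1 := by omega
        rw [hj']
        exact hedgeB (j + l)
      · simp only [if_neg (by omega : ¬ k = 0), if_neg (by omega : ¬ k + 1 = 0)]
        have h1 : k - 1 < l := by omega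
        have h2 : k + 1 - 1 = (k - 1) + 1 := by omega
        rw [h2]
        exact hgs (k - 1) h1
  tfae_have 1 → 2 := by
    intro h1
    by_contra h2
    apply h1
    rw [Set.not_nonempty_iff_eq_empty] at h2
    set E := closure (Set.range fun n : ℤ => (f.toEquiv ^ (2 * n)) x) with hE
    set O := closure (Set.range fun p : ℤ => (f.toEquiv ^ (2 * p + 1)) x) with hO
    have hdisj : ∀ w : X, w ∈ E → w ∈ O → False := fun w hwE hwO =>
      Set.eq_empty_iff_forall_notMem.mp h2 w ⟨hwE, hwO⟩
    have hcover : ∀ w : X, w ∈ E ∨ w ∈ O := by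
      have hsub : Set.range (fun i : ℤ => (f.toEquiv ^ i) x) ⊆
          (Set.range fun n : ℤ => (f.toEquiv ^ (2 * n)) x) ∪
          (Set.range fun p : ℤ => (f.toEquiv ^ (2 * p + 1)) x) := by
        rintro _ ⟨i, rfl⟩
        rcases Int.even_or_odd i with ⟨n, hn⟩ | ⟨n, hn⟩
        · exact Or.inl ⟨n, show (f.toEquiv ^ (2 * n)) x = (f.toEquiv ^ i) x by
            rw [show (2 * n : ℤ) = i by omega]⟩
        · exact Or.inr ⟨n, show (f.toEquiv ^ (2 * n + 1)) x = (f.toEquiv ^ i) x by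
            rw [show (2 * n + 1 : ℤ) = i by omega]⟩
      intro w
      have hw : w ∈ closure ((Set.range fun n : ℤ => (f.toEquiv ^ (2 * n)) x) ∪
          (Set.range fun p : ℤ => (f.toEquiv ^ (2 * p + 1)) x)) :=
        closure_mono hsub (by rw [hx.closure_eq]; trivial)
      rw [closure_union] at hw
      exact hw
    have hEOc : E = Oᶜ := by
      ext w
      constructor
      · intro hw hwO; exact hdisj w hw hwO
      · intro hw; rcases hcover w with h | h
        · exact h
        · exact absurd h hw
    have hclopen : IsClopen E :=
      ⟨isClosed_closure, by rw [hEOc]; exact isClosed_closure.isOpen_compl⟩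
    -- images
    have hfE : ∀ w ∈ E, f w ∈ O := by
      intro w hw
      have hi1 : f '' E ⊆ closure (f '' (Set.range fun n : ℤ => (f.toEquiv ^ (2 * n)) x)) :=
        image_closure_subset_closure_image f.continuous
      have hi2 : f '' (Set.range fun n : ℤ => (f.toEquiv ^ (2 * n)) x) ⊆
          Set.range fun p : ℤ => (f.toEquiv ^ (2 * p + 1)) x := by
        rintro _ ⟨_, ⟨n, rfl⟩, rfl⟩
        exact ⟨n, show (f.toEquiv ^ (2 * n + 1)) x = f ((f.toEquiv ^ (2 * n)) x) from
          horb1 (2 * n)⟩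
      exact closure_mono hi2 (hi1 ⟨w, hw, rfl⟩)
    have hfO : ∀ w ∈ O, f w ∈ E := by
      intro w hw
      have hi1 : f '' O ⊆ closure (f '' (Set.range fun p : ℤ => (f.toEquiv ^ (2 * p + 1)) x)) :=
        image_closure_subset_closure_image f.continuous
      have hi2 : f '' (Set.range fun p : ℤ => (f.toEquiv ^ (2 * p + 1)) x) ⊆
          Set.range fun n : ℤ => (f.toEquiv ^ (2 * n)) x := by
        rintro _ ⟨_, ⟨p, rfl⟩, rfl⟩
        refine ⟨p + 1, show (f.toEquiv ^ (2 * (p + 1))) x = f ((f.toEquiv ^ (2 * p + 1)) x)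
          from ?_⟩
        rw [show (2 * (p + 1) : ℤ) = (2 * p + 1) + 1 by ring]
        exact horb1 (2 * p + 1)
      exact closure_mono hi2 (hi1 ⟨w, hw, rfl⟩)
    refine ⟨fun y => if y ∈ E then 0 else 1, ?_, ?_⟩
    · rw [continuous_discrete_rng]
      intro b
      have hb : b = 0 ∨ b = 1 := by omega
      have hp0 : (fun y => if y ∈ E then (0 : Fin 2) else 1) ⁻¹' {0} = E := by
        ext y; by_cases hy : y ∈ E <;> simp [hy]
      have hp1 : (fun y => if y ∈ E then (0 : Fin 2) else 1) ⁻¹' {1} = Eᶜ := by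
        ext y; by_cases hy : y ∈ E <;> simp [hy]
      rcases hb with rfl | rfl
      · rw [hp0]; exact hclopen.2
      · rw [hp1]; exact hclopen.1.isOpen_compl
    · intro y z hyzG
      obtain ⟨hyz, hor⟩ := hyzG
      have hor' : z = f y ∨ y = f z := hor
      have key : (y ∈ E ∧ z ∉ E) ∨ (y ∉ E ∧ z ∈ E) := by
        by_cases hy : y ∈ E
        · left
          refine ⟨hy, fun hz => ?_⟩
          rcases hor' with h | h
          · exact hdisj z hz (by rw [h]; exact hfE y hy)
          · exact hdisj y hy (by rw [h]; exact hfE z hz)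
        · right
          refine ⟨hy, ?_⟩
          have hyO : y ∈ O := by rw [hEOc] at hy; simpa using hy
          rcases hor' with h | h
          · rw [h]; exact hfO y hyO
          · by_contra hz
            have hzO : z ∈ O := by rw [hEOc] at hz; simpa using hz
            exact hy (by rw [h]; exact hfO z hzO)
      rcases key with ⟨ha, hb⟩ | ⟨ha, hb⟩ <;> simp [ha, hb]
  tfae_have 2 → 3 := by
    rintro ⟨y, hyE, hyO⟩
    refine ⟨y, ?_⟩
    rw [mem_closure_iff_nhds]
    intro t ht
    rw [mem_nhds_prod_iff] at ht
    obtain ⟨U, hU, V, hV, hUV⟩ := ht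
    obtain ⟨a, haU, n, hn⟩ := mem_closure_iff_nhds.mp hyE U hU
    obtain ⟨b, hbV, p, hp⟩ := mem_closure_iff_nhds.mp hyO V hV
    refine ⟨(a, b), hUV ⟨haU, hbV⟩, ?_⟩
    rw [Set.mem_iUnion]
    rcases le_or_gt (2 * n) (2 * p + 1) with h | h
    · obtain ⟨q, hq⟩ : ∃ q : ℕ, (2 * q + 1 : ℤ) = 2 * p + 1 - 2 * n := ⟨(p - n).toNat, by omega⟩
      refine ⟨q, ?_⟩
      rw [← hn, ← hp]
      exact pathF (2 * q + 1) (2 * n) (2 * p + 1) (by push_cast; omega)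
    · obtain ⟨q, hq⟩ : ∃ q : ℕ, (2 * q + 1 : ℤ) = 2 * n - (2 * p + 1) :=
        ⟨(n - p - 1).toNat, by omega⟩
      refine ⟨q, ?_⟩
      rw [← hn, ← hp]
      exact pathB (2 * q + 1) (2 * n) (2 * p + 1) (by push_cast; omega)
  tfae_have 3 → 4 := by
    rintro ⟨y, hy⟩
    exact ⟨y, closure_mono (Set.iUnion_mono fun p => relPow_mono subset_closure _) hy⟩
  tfae_have 4 → 1 := by
    rintro ⟨y, hy⟩ ⟨c, hc, hcol⟩
    set D : Set (X × X) := {p | c p.1 ≠ c p.2} with hD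
    have hDclosed : IsClosed D := by
      have hDeq : D = (fun p : X × X => (c p.1, c p.2)) ⁻¹' {q : Fin 2 × Fin 2 | q.1 ≠ q.2} := rfl
      rw [hDeq]
      exact (isClosed_discrete _).preimage
        ((hc.comp continuous_fst).prodMk (hc.comp continuous_snd))
    have hGD : closure (FnGraph ⇑f) ⊆ D :=
      closure_minimal (fun p hp => hcol p.1 p.2 hp) hDclosed
    have hpar : ∀ (l : ℕ) (a b : X), (a, b) ∈ RelPow D l → c b = c a + (l : Fin 2) := by
      intro l
      induction l with
      | zero =>
        rintro a b ⟨g, hg0, hgl, -⟩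
        have hab : a = b := hg0.symm.trans hgl
        subst hab
        simp
      | succ l ih =>
        rintro a b ⟨g, hg0, hgl, hgs⟩
        have h1 : ((a, g l) : X × X) ∈ RelPow D l :=
          ⟨g, hg0, rfl, fun i hi => hgs i (by omega)⟩
        have h2 := ih a (g l) h1
        have h3 : c (g l) ≠ c (g (l + 1)) := hgs l (by omega)
        have h4 : c (g (l + 1)) = c (g l) + 1 := fin2_step _ _ h3
        have hb : g (l + 1) = b := hgl
        rw [← hb, h4, h2]
        rw [Nat.cast_succ, add_assoc]
    have hsubD : (⋃ p : ℕ, RelPow (closure (FnGraph ⇑f)) (2 * p + 1)) ⊆ D := by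
      rintro ⟨a, b⟩ hm
      rw [Set.mem_iUnion] at hm
      obtain ⟨q, hq⟩ := hm
      have hq' : ((a, b) : X × X) ∈ RelPow D (2 * q + 1) := relPow_mono hGD _ hq
      have hval := hpar (2 * q + 1) a b hq'
      have hcast : ((2 * q + 1 : ℕ) : Fin 2) = 1 := by rw [Fin.ext_iff, Fin.val_natCast]; simp [Nat.add_mod]
      rw [hcast] at hval
      show c a ≠ c b
      rw [hval]
      exact (by decide : ∀ u : Fin 2, u ≠ u + 1) (c a)
    have hyD := closure_minimal hsubD hDclosed hy
    exact hyD rfl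
  tfae_finish
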